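/- arXiv:1401.7704 — 3 statements merged into one kernel-verified Lean document; each statement's English description precedes it below -/
import Mathlib

section
/- Let R > 0 and let σ_n : ℝ → ℝ (n = 0, 1, 2, …) be differentiable functions satisfying the recursion σ_0'(x) = −2σ_1(x) and, for n ≥ 1, σ_n'(x) = −2σ_{n+1}(x) + Σ_{j=0}^{n−1} σ_j(x)σ_{n−1−j}(x), together with the bounds |σ_n(x)| ≤ R^{n+2} for all n ≥ 0 and x ∈ ℝ. Then each σ_n is infinitely differentiable, and for all integers n, p ≥ 0 and all x ∈ ℝ, |σ_n^{(p)}(x)| ≤ R^{n+p+2} · (n+1+p)!/(n+1)!. -/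
open MeasureTheory Filter Set

noncomputable section

/-- Vandermonde-type identity for ascending factorials. -/
private lemma ascV (a b : ℕ) : ∀ p : ℕ, ∑ i ∈ Finset.range (p+1),
    p.choose i * a.ascFactorial i * b.ascFactorial (p-i) = (a+b).ascFactorial p
  | 0 => by simp
  | p+1 => by
    have h1 : ∑ i ∈ Finset.range (p+2),
        (p+1).choose i * a.ascFactorial i * b.ascFactorial (p+1-i)
        = (∑ i ∈ Finset.range (p+1),
            p.choose i * a.ascFactorial (i+1) * b.ascFactorial (p-i))
          + ∑ i ∈ Finset.range (p+2),
            p.choose i * a.ascFactorial i * b.ascFactorial (p+1-i) := by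
      rw [Finset.sum_range_succ' (fun i => (p+1).choose i * a.ascFactorial i *
        b.ascFactorial (p+1-i)) (p+1)]
      rw [Finset.sum_range_succ' (fun i => p.choose i * a.ascFactorial i *
        b.ascFactorial (p+1-i)) (p+1)]
      simp only [Nat.choose_succ_succ', Nat.succ_sub_succ, Nat.choose_zero_right]
      rw [Finset.sum_congr rfl (fun i _ => by ring_nf :
        ∀ i ∈ Finset.range (p+1), (p.choose i + p.choose (i+1)) * a.ascFactorial (i+1) *
          b.ascFactorial (p-i) = p.choose i * a.ascFactorial (i+1) * b.ascFactorial (p-i)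
          + p.choose (i+1) * a.ascFactorial (i+1) * b.ascFactorial (p-i))]
      rw [Finset.sum_add_distrib]
      ring
    have h2 : ∑ i ∈ Finset.range (p+2),
        p.choose i * a.ascFactorial i * b.ascFactorial (p+1-i)
        = ∑ i ∈ Finset.range (p+1),
          p.choose i * a.ascFactorial i * ((b + (p-i)) * b.ascFactorial (p-i)) := by
      rw [Finset.sum_range_succ]
      rw [Nat.choose_succ_self, Nat.zero_mul, Nat.zero_mul, Nat.add_zero]
      refine Finset.sum_congr rfl (fun i hi => ?_)
      have hi' : i < p+1 := Finset.mem_range.mp hi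
      have : p + 1 - i = (p - i) + 1 := by omega
      rw [this, Nat.ascFactorial_succ]
    have h3 : ∀ i ∈ Finset.range (p+1),
        p.choose i * a.ascFactorial (i+1) * b.ascFactorial (p-i)
          + p.choose i * a.ascFactorial i * ((b + (p-i)) * b.ascFactorial (p-i))
        = (a + b + p) * (p.choose i * a.ascFactorial i * b.ascFactorial (p-i)) := by
      intro i hi
      have hi' : i < p+1 := Finset.mem_range.mp hi
      rw [Nat.ascFactorial_succ]
      have : (a + i) + (b + (p - i)) = a + b + p := by omega
      calc p.choose i * ((a+i) * a.ascFactorial i) * b.ascFactorial (p-i)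
          + p.choose i * a.ascFactorial i * ((b + (p-i)) * b.ascFactorial (p-i))
          = ((a+i) + (b + (p-i))) * (p.choose i * a.ascFactorial i * b.ascFactorial (p-i)) := by
            ring
        _ = (a + b + p) * (p.choose i * a.ascFactorial i * b.ascFactorial (p-i)) := by rw [this]
    rw [h1, h2, ← Finset.sum_add_distrib, Finset.sum_congr rfl h3, ← Finset.mul_sum,
      ascV a b p, Nat.ascFactorial_succ]

private lemma contDiff_of_top {f : ℝ → ℝ} (hf : ContDiff ℝ (⊤ : ℕ∞) f) (p : ℕ) :
    ContDiff ℝ (p : WithTop ℕ∞) f :=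
  hf.of_le (by exact_mod_cast le_top)

private lemma itd_add {f g : ℝ → ℝ} (p : ℕ) (hf : ContDiff ℝ (⊤ : ℕ∞) f)
    (hg : ContDiff ℝ (⊤ : ℕ∞) g) (x : ℝ) :
    iteratedDeriv p (fun y => f y + g y) x = iteratedDeriv p f x + iteratedDeriv p g x := by
  simp_rw [← iteratedDerivWithin_univ]
  exact iteratedDerivWithin_add (Set.mem_univ x) uniqueDiffOn_univ
    (contDiff_of_top hf p).contDiffAt.contDiffWithinAt (contDiff_of_top hg p).contDiffAt.contDiffWithinAt

private lemma itd_const_mul {f : ℝ → ℝ} (p : ℕ) (hf : ContDiff ℝ (⊤ : ℕ∞) f) (c x : ℝ) :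
    iteratedDeriv p (fun y => c * f y) x = c * iteratedDeriv p f x := by
  simp_rw [← iteratedDerivWithin_univ]
  exact iteratedDerivWithin_const_mul (Set.mem_univ x) uniqueDiffOn_univ c
    (contDiff_of_top hf p).contDiffAt.contDiffWithinAt

private lemma itd_sum (s : Finset ℕ) (F : ℕ → ℝ → ℝ)
    (hF : ∀ j, ContDiff ℝ (⊤ : ℕ∞) (F j)) (p : ℕ) (x : ℝ) :
    iteratedDeriv p (fun y => ∑ j ∈ s, F j y) x = ∑ j ∈ s, iteratedDeriv p (F j) x := by
  classical
  induction s using Finset.induction with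
  | empty =>
      simp only [Finset.sum_empty]
      have hz : ∀ q : ℕ, iteratedDeriv q (fun _ : ℝ => (0:ℝ)) = fun _ => 0 := by
        intro q
        induction q with
        | zero => simp
        | succ q ihq => rw [iteratedDeriv_succ, ihq]; simp
      simp [hz p]
  | insert _ _ hj ih =>
      rename_i a s'
      rw [Finset.sum_insert hj]
      have : (fun y => ∑ j ∈ insert a s', F j y) = fun y => F a y + ∑ j ∈ s', F j y := by
        funext y; rw [Finset.sum_insert hj]
      rw [this, itd_add p (hF a) (ContDiff.sum fun j _ => hF j) x, ih]

private lemma itd_mul_bound {f g : ℝ → ℝ} (p : ℕ) (hf : ContDiff ℝ (⊤ : ℕ∞) f)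
    (hg : ContDiff ℝ (⊤ : ℕ∞) g) (x : ℝ) :
    |iteratedDeriv p (fun y => f y * g y) x| ≤ ∑ i ∈ Finset.range (p+1),
      (p.choose i : ℝ) * |iteratedDeriv i f x| * |iteratedDeriv (p-i) g x| := by
  have h := norm_iteratedFDeriv_mul_le (𝕜 := ℝ) hf hg x
    (n := p) (by exact_mod_cast le_top)
  simpa [norm_iteratedFDeriv_eq_norm_iteratedDeriv, Real.norm_eq_abs] using h

/-- Lemma 4.2: let `R > 0` and let `σ_n : ℝ → ℝ` (`n ≥ 0`) be differentiable functions with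
`σ₀' = -2σ₁`, `σ_n' = -2σ_{n+1} + Σ_{j=0}^{n-1} σ_j σ_{n-1-j}` for `n ≥ 1`, and
`|σ_n(x)| ≤ R^{n+2}`. Then each `σ_n` is infinitely differentiable and
`|σ_n^{(p)}(x)| ≤ R^{n+p+2} (n+1+p)!/(n+1)!` for all `n, p ≥ 0` and `x ∈ ℝ`. -/
theorem statement11 (R : ℝ) (hR : 0 < R) (σ : ℕ → ℝ → ℝ)
    (hdiff : ∀ n : ℕ, Differentiable ℝ (σ n))
    (hrec0 : ∀ x : ℝ, deriv (σ 0) x = -2 * σ 1 x)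
    (hrec : ∀ n : ℕ, 1 ≤ n → ∀ x : ℝ, deriv (σ n) x =
      -2 * σ (n+1) x + ∑ j ∈ Finset.range n, σ j x * σ (n - 1 - j) x)
    (hbound : ∀ (n : ℕ) (x : ℝ), |σ n x| ≤ R ^ (n + 2)) :
    ∀ n : ℕ, ContDiff ℝ (⊤ : ℕ∞) (σ n) ∧
      ∀ (p : ℕ) (x : ℝ), |iteratedDeriv p (σ n) x| ≤
        R ^ (n + p + 2) * (Nat.factorial (n + 1 + p)) / (Nat.factorial (n + 1)) := by
  -- uniform derivative formula
  have hderiv : ∀ n, deriv (σ n) =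
      fun x => -2 * σ (n+1) x + ∑ j ∈ Finset.range n, σ j x * σ (n - 1 - j) x := by
    intro n; funext x
    match n with
    | 0 => simpa using hrec0 x
    | Nat.succ m => exact hrec (m+1) (Nat.succ_le_succ (Nat.zero_le m)) x
  -- smoothness
  have hsm : ∀ (k : ℕ) (n : ℕ), ContDiff ℝ (k : WithTop ℕ∞) (σ n) := by
    intro k
    induction k with
    | zero => intro n; exact contDiff_zero.mpr (hdiff n).continuous
    | succ k ih =>
      intro n
      have : ((k+1 : ℕ) : WithTop ℕ∞) = (k : WithTop ℕ∞) + 1 := by push_cast; ring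
      rw [this]
      refine contDiff_succ_iff_deriv.mpr ⟨hdiff n, ?_, ?_⟩
      · intro h; simp at h
      · rw [hderiv n]
        exact (contDiff_const.mul (ih (n+1))).add
          (ContDiff.sum fun j _ => (ih j).mul (ih (n-1-j)))
  have hsmooth : ∀ n, ContDiff ℝ (⊤ : ℕ∞) (σ n) := fun n =>
    contDiff_infty.mpr fun k => hsm k n
  -- main bound in ascFactorial form
  have hB : ∀ (p n : ℕ) (x : ℝ),
      |iteratedDeriv p (σ n) x| ≤ R ^ (n+p+2) * ((n+2).ascFactorial p : ℝ) := by
    intro p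
    induction p using Nat.strong_induction_on with
    | _ p ihp =>
      match p with
      | 0 => intro n x; simpa using hbound n x
      | p+1 =>
        intro n x
        rw [iteratedDeriv_succ', hderiv n]
        have e1 : iteratedDeriv p (fun y => -2 * σ (n+1) y +
              ∑ j ∈ Finset.range n, σ j y * σ (n-1-j) y) x
            = -2 * iteratedDeriv p (σ (n+1)) x +
              ∑ j ∈ Finset.range n, iteratedDeriv p (fun y => σ j y * σ (n-1-j) y) x := by
          rw [itd_add p (contDiff_const.mul (hsmooth (n+1)))
            (ContDiff.sum fun j _ => (hsmooth j).mul (hsmooth (n-1-j))) x,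
            itd_const_mul p (hsmooth (n+1)) (-2) x,
            itd_sum (Finset.range n) (fun j y => σ j y * σ (n-1-j) y)
              (fun j => (hsmooth j).mul (hsmooth (n-1-j))) p x]
        rw [e1]
        -- bound each product term
        have hterm : ∀ j ∈ Finset.range n,
            |iteratedDeriv p (fun y => σ j y * σ (n-1-j) y) x|
              ≤ R ^ (n+p+3) * ((n+3).ascFactorial p : ℝ) := by
          intro j hj
          have hj' : j < n := Finset.mem_range.mp hj
          have step1 := itd_mul_bound p (hsmooth j) (hsmooth (n-1-j)) x
          have step2 : ∑ i ∈ Finset.range (p+1),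
              (p.choose i : ℝ) * |iteratedDeriv i (σ j) x| * |iteratedDeriv (p-i) (σ (n-1-j)) x|
              ≤ ∑ i ∈ Finset.range (p+1), (p.choose i : ℝ) *
                (R ^ (j+i+2) * ((j+2).ascFactorial i : ℝ)) *
                (R ^ ((n-1-j)+(p-i)+2) * (((n-1-j)+2).ascFactorial (p-i) : ℝ)) := by
            refine Finset.sum_le_sum fun i hi => ?_
            have hi' : i < p + 1 := Finset.mem_range.mp hi
            have b1 := ihp i (by omega) j x
            have b2 := ihp (p-i) (by omega) (n-1-j) x
            have h1 : (p.choose i : ℝ) * |iteratedDeriv i (σ j) x|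
                ≤ (p.choose i : ℝ) * (R ^ (j+i+2) * ((j+2).ascFactorial i : ℝ)) :=
              mul_le_mul le_rfl b1 (abs_nonneg _) (by positivity)
            exact mul_le_mul h1 b2 (abs_nonneg _) (by positivity)
          have step3 : ∑ i ∈ Finset.range (p+1), (p.choose i : ℝ) *
                (R ^ (j+i+2) * ((j+2).ascFactorial i : ℝ)) *
                (R ^ ((n-1-j)+(p-i)+2) * (((n-1-j)+2).ascFactorial (p-i) : ℝ))
              = R ^ (n+p+3) * ((n+3).ascFactorial p : ℝ) := by
            have hre : ∀ i ∈ Finset.range (p+1), (p.choose i : ℝ) *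
                (R ^ (j+i+2) * ((j+2).ascFactorial i : ℝ)) *
                (R ^ ((n-1-j)+(p-i)+2) * (((n-1-j)+2).ascFactorial (p-i) : ℝ))
                = R ^ (n+p+3) * ((p.choose i : ℝ) * ((j+2).ascFactorial i : ℝ) *
                    (((n-1-j)+2).ascFactorial (p-i) : ℝ)) := by
              intro i hi
              have hi' : i < p + 1 := Finset.mem_range.mp hi
              have hpow : R ^ (j+i+2) * R ^ ((n-1-j)+(p-i)+2) = R ^ (n+p+3) := by
                rw [← pow_add]
                congr 1
                omega
              calc (p.choose i : ℝ) * (R ^ (j+i+2) * ((j+2).ascFactorial i : ℝ)) *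
                  (R ^ ((n-1-j)+(p-i)+2) * (((n-1-j)+2).ascFactorial (p-i) : ℝ))
                  = (R ^ (j+i+2) * R ^ ((n-1-j)+(p-i)+2)) * ((p.choose i : ℝ) *
                      ((j+2).ascFactorial i : ℝ) * (((n-1-j)+2).ascFactorial (p-i) : ℝ)) := by
                    ring
                _ = _ := by rw [hpow]
            rw [Finset.sum_congr rfl hre, ← Finset.mul_sum]
            congr 1
            have hv := ascV (j+2) ((n-1-j)+2) p
            have h2 : (j+2) + ((n-1-j)+2) = n+3 := by omega
            rw [h2] at hv
            exact_mod_cast congrArg (fun k : ℕ => (k : ℝ)) hv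
          calc |iteratedDeriv p (fun y => σ j y * σ (n-1-j) y) x|
              ≤ _ := step1
            _ ≤ _ := step2
            _ = _ := step3
        -- combine
        have hb1 : |iteratedDeriv p (σ (n+1)) x| ≤ R ^ (n+p+3) * ((n+3).ascFactorial p : ℝ) := by
          have := ihp p (by omega) (n+1) x
          have e : (n+1)+p+2 = n+p+3 := by omega
          have e2 : (n+1)+2 = n+3 := by omega
          rwa [e, e2] at this
        have hsum : |∑ j ∈ Finset.range n, iteratedDeriv p (fun y => σ j y * σ (n-1-j) y) x|
            ≤ (n : ℝ) * (R ^ (n+p+3) * ((n+3).ascFactorial p : ℝ)) := by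
          calc |∑ j ∈ Finset.range n, iteratedDeriv p (fun y => σ j y * σ (n-1-j) y) x|
              ≤ ∑ j ∈ Finset.range n, |iteratedDeriv p (fun y => σ j y * σ (n-1-j) y) x| :=
                Finset.abs_sum_le_sum_abs _ _
            _ ≤ ∑ _j ∈ Finset.range n, R ^ (n+p+3) * ((n+3).ascFactorial p : ℝ) :=
                Finset.sum_le_sum hterm
            _ = (n : ℝ) * (R ^ (n+p+3) * ((n+3).ascFactorial p : ℝ)) := by
                rw [Finset.sum_const, Finset.card_range, nsmul_eq_mul]
        have habs : |(-2) * iteratedDeriv p (σ (n+1)) x +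
              ∑ j ∈ Finset.range n, iteratedDeriv p (fun y => σ j y * σ (n-1-j) y) x|
            ≤ 2 * |iteratedDeriv p (σ (n+1)) x| +
              |∑ j ∈ Finset.range n, iteratedDeriv p (fun y => σ j y * σ (n-1-j) y) x| := by
          calc _ ≤ |(-2) * iteratedDeriv p (σ (n+1)) x| + _ := abs_add_le _ _
            _ = 2 * |iteratedDeriv p (σ (n+1)) x| + _ := by
                rw [abs_mul]; norm_num
        have hfin : (2 : ℝ) * (R ^ (n+p+3) * ((n+3).ascFactorial p : ℝ)) +
            (n : ℝ) * (R ^ (n+p+3) * ((n+3).ascFactorial p : ℝ))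
            = R ^ (n+(p+1)+2) * (((n+2).ascFactorial (p+1) : ℕ) : ℝ) := by
          have e : n+(p+1)+2 = n+p+3 := by omega
          have hstep : (n+2).ascFactorial (p+1) = (n+2) * (n+3).ascFactorial p := by
            have := Nat.succ_ascFactorial (n+2) p
            rw [Nat.ascFactorial_succ, ← this]
          rw [e, hstep]
          push_cast
          ring
        calc |(-2) * iteratedDeriv p (σ (n+1)) x +
              ∑ j ∈ Finset.range n, iteratedDeriv p (fun y => σ j y * σ (n-1-j) y) x|
            ≤ 2 * |iteratedDeriv p (σ (n+1)) x| +
              |∑ j ∈ Finset.range n, iteratedDeriv p (fun y => σ j y * σ (n-1-j) y) x| := habs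
          _ ≤ 2 * (R ^ (n+p+3) * ((n+3).ascFactorial p : ℝ)) +
              (n : ℝ) * (R ^ (n+p+3) * ((n+3).ascFactorial p : ℝ)) := by
              gcongr
          _ = R ^ (n+(p+1)+2) * (((n+2).ascFactorial (p+1) : ℕ) : ℝ) := hfin
  -- conclude
  intro n
  refine ⟨hsmooth n, fun p x => ?_⟩
  have hfact : ((n+1+p).factorial : ℝ) = ((n+1).factorial : ℝ) * ((n+2).ascFactorial p : ℝ) := by
    exact_mod_cast congrArg (fun k : ℕ => (k : ℝ)) (Nat.factorial_mul_ascFactorial (n+1) p).symm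
  rw [hfact]
  have hne : ((n+1).factorial : ℝ) ≠ 0 := by positivity
  have : R ^ (n+p+2) * (((n+1).factorial : ℝ) * ((n+2).ascFactorial p : ℝ)) /
      ((n+1).factorial : ℝ) = R ^ (n+p+2) * ((n+2).ascFactorial p : ℝ) := by
    field_simp
  rw [this]
  exact hB p n x
end
end

section
/- For every infinitely differentiable, compactly supported g : ℝ → ℝ, the integral ∫_0^∞ x^{−1/2} ( ∫_ℝ g(t)·sin(t√x)/√x dt ) dx converges absolutely and equals π ∫_ℝ sgn(t) g(t) dt. -/
open MeasureTheory Filter Set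

noncomputable section

namespace St17

open Real intervalIntegral

/-- The sine integral. -/
def Si (y : ℝ) : ℝ := ∫ v in (0:ℝ)..y, Real.sin v / v

lemma abs_sinc_le_one (v : ℝ) : |Real.sin v / v| ≤ 1 := by
  rcases eq_or_ne v 0 with h | h
  · simp [h]
  · rw [abs_div, div_le_one (abs_pos.mpr h)]
    exact Real.abs_sin_le_abs

lemma sinc_intervalIntegrable (a b : ℝ) :
    IntervalIntegrable (fun v => Real.sin v / v) volume a b := by
  have hm : Measurable fun v : ℝ => Real.sin v / v :=
    Real.measurable_sin.div measurable_id
  constructor <;>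
  · refine Integrable.mono' (integrable_const 1) hm.aestronglyMeasurable ?_
    exact Filter.Eventually.of_forall fun v => abs_sinc_le_one v

lemma continuous_Si : Continuous Si :=
  intervalIntegral.continuous_primitive (fun a b => sinc_intervalIntegrable a b) 0

lemma Si_neg (y : ℝ) : Si (-y) = - Si y := by
  have : Si y = ∫ x in (0:ℝ)..y, Real.sin (-x) / (-x) := by
    unfold Si
    congr 1
    ext x
    rw [Real.sin_neg]
    rcases eq_or_ne x 0 with h | h
    · simp [h]
    · field_simp
  rw [this, intervalIntegral.integral_comp_neg (fun v => Real.sin v / v)]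
  unfold Si
  rw [neg_zero, ← intervalIntegral.integral_symm]

lemma hasDerivAt_aux (s u : ℝ) :
    HasDerivAt (fun w => -(Real.exp (-(s*w)) * (Real.cos w + s * Real.sin w)) / (1 + s^2))
      (Real.exp (-(s*u)) * Real.sin u) u := by
  have h1 : HasDerivAt (fun w : ℝ => Real.exp (-(s*w))) (Real.exp (-(s*u)) * (-s)) u := by
    have : HasDerivAt (fun w : ℝ => -(s*w)) (-s) u := by
      exact ((hasDerivAt_id u).const_mul s).neg.congr_deriv (by simp)
    exact (Real.hasDerivAt_exp _).comp u this
  have h2 : HasDerivAt (fun w : ℝ => Real.cos w + s * Real.sin w)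
      (-Real.sin u + s * Real.cos u) u :=
    (Real.hasDerivAt_cos u).add ((Real.hasDerivAt_sin u).const_mul s)
  have h3 := (h1.mul h2).neg.div_const (1 + s^2)
  have hs : (1 : ℝ) + s^2 ≠ 0 := by positivity
  refine h3.congr_deriv ?_
  rw [div_eq_iff hs]
  ring

lemma integral_exp_sin (s R : ℝ) :
    ∫ u in (0:ℝ)..R, Real.exp (-(s*u)) * Real.sin u
      = (1 - Real.exp (-(s*R)) * (Real.cos R + s * Real.sin R)) / (1 + s^2) := by
  have h := intervalIntegral.integral_eq_sub_of_hasDerivAt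
    (f := fun w => -(Real.exp (-(s*w)) * (Real.cos w + s * Real.sin w)) / (1 + s^2))
    (a := 0) (b := R) (fun u _ => hasDerivAt_aux s u) ?_
  · rw [h]
    simp only [mul_zero, neg_zero, Real.exp_zero, Real.cos_zero, Real.sin_zero, one_mul]
    ring
  · apply Continuous.intervalIntegrable
    continuity


lemma ratio_bound (s : ℝ) (hs : 0 ≤ s) :
    |Real.cos R + s * Real.sin R| / (1 + s^2) ≤ 2 := by
  have h1 : |Real.cos R + s * Real.sin R| ≤ 1 + s := by
    calc |Real.cos R + s * Real.sin R| ≤ |Real.cos R| + |s * Real.sin R| := abs_add_le _ _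
    _ ≤ 1 + s := by
        have := Real.abs_cos_le_one R
        have h2 : |s * Real.sin R| ≤ s := by
          rw [abs_mul, abs_of_nonneg hs]
          nlinarith [Real.abs_sin_le_one R, abs_nonneg (Real.sin R)]
        linarith
  have h3 : (0:ℝ) < 1 + s^2 := by positivity
  rw [div_le_iff₀ h3]
  nlinarith [sq_nonneg (s - 1), sq_nonneg s]

lemma integrable_remainder {R : ℝ} (hR : 0 < R) :
    IntegrableOn (fun s => Real.exp (-(s*R)) * (Real.cos R + s * Real.sin R) / (1 + s^2))
      (Ioi (0:ℝ)) := by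
  refine Integrable.mono' ((exp_neg_integrableOn_Ioi 0 hR).const_mul 2) ?_ ?_
  · apply Measurable.aestronglyMeasurable
    measurability
  · filter_upwards [ae_restrict_mem measurableSet_Ioi] with s hs
    have hs' : (0:ℝ) ≤ s := le_of_lt hs
    have h0 : ‖Real.exp (-(s*R)) * (Real.cos R + s * Real.sin R) / (1 + s^2)‖
        = Real.exp (-(s*R)) * (|Real.cos R + s * Real.sin R| / (1 + s^2)) := by
      rw [Real.norm_eq_abs, abs_div, abs_mul, abs_of_pos (Real.exp_pos _),
        abs_of_pos (by positivity : (0:ℝ) < 1 + s^2), mul_div_assoc]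
    rw [h0]
    have h1 := ratio_bound (R := R) s hs'
    have h2 : -R * s = -(s*R) := by ring
    rw [h2]
    nlinarith [Real.exp_pos (-(s*R)), mul_le_mul_of_nonneg_left h1 (Real.exp_pos (-(s*R))).le]

lemma integral_exp_neg_mul {c : ℝ} (hc : 0 < c) :
    ∫ s in Ioi (0:ℝ), Real.exp (-(c*s)) = 1/c := by
  have := integral_comp_mul_left_Ioi (fun x => Real.exp (-x)) 0 hc
  simp only [mul_zero] at this
  rw [show (fun s => Real.exp (-(c*s))) = fun s => (fun x => Real.exp (-x)) (c*s) from rfl,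
    this, integral_exp_neg_Ioi_zero, smul_eq_mul, mul_one, one_div]

lemma Si_eq {R : ℝ} (hR : 0 < R) :
    Si R = Real.pi/2
      - ∫ s in Ioi (0:ℝ), Real.exp (-(s*R)) * (Real.cos R + s * Real.sin R) / (1 + s^2) := by
  have hmeas : Measurable fun p : ℝ × ℝ => Real.exp (-(p.2 * p.1)) * Real.sin p.1 :=
    ((measurable_snd.mul measurable_fst).neg.exp).mul measurable_fst.sin
  have key : Si R = ∫ s in Ioi (0:ℝ),
      (1 - Real.exp (-(s*R)) * (Real.cos R + s * Real.sin R)) / (1 + s^2) := by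
    have h1 : Si R = ∫ u in Ioc (0:ℝ) R, Real.sin u / u := by
      unfold Si; rw [intervalIntegral.integral_of_le hR.le]
    have h2 : ∀ u ∈ Ioc (0:ℝ) R,
        Real.sin u / u = ∫ s in Ioi (0:ℝ), Real.exp (-(s*u)) * Real.sin u := by
      intro u hu
      rw [MeasureTheory.integral_mul_const]
      rw [show (fun s => Real.exp (-(s*u))) = (fun s => Real.exp (-(u*s))) from
        funext fun s => by rw [mul_comm], integral_exp_neg_mul hu.1]
      rw [div_eq_mul_inv, mul_comm, one_div]
    rw [h1, MeasureTheory.setIntegral_congr_fun measurableSet_Ioc h2]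
    have hint : Integrable (fun p : ℝ × ℝ => Real.exp (-(p.2 * p.1)) * Real.sin p.1)
        ((volume.restrict (Ioc (0:ℝ) R)).prod (volume.restrict (Ioi (0:ℝ)))) := by
      rw [MeasureTheory.integrable_prod_iff hmeas.aestronglyMeasurable]
      constructor
      · filter_upwards [ae_restrict_mem measurableSet_Ioc] with u hu
        refine Integrable.mono' ((exp_neg_integrableOn_Ioi 0 hu.1).const_mul 1) ?_ ?_
        · exact (((measurable_id.mul_const u).neg.exp).mul measurable_const).aestronglyMeasurable
        · filter_upwards [ae_restrict_mem measurableSet_Ioi] with s _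
          rw [Real.norm_eq_abs, abs_mul, abs_of_pos (Real.exp_pos _)]
          have h3 : -u * s = -(s*u) := by ring
          rw [h3]
          nlinarith [Real.exp_pos (-(s*u)), Real.abs_sin_le_one u,
            abs_nonneg (Real.sin u),
            mul_le_mul_of_nonneg_left (Real.abs_sin_le_one u) (Real.exp_pos (-(s*u))).le]
      · refine Integrable.mono' (integrable_const 1) ?_ ?_
        · exact (StronglyMeasurable.integral_prod_right' (f := fun p : ℝ × ℝ => ‖Real.exp (-(p.2 * p.1)) * Real.sin p.1‖) hmeas.norm.stronglyMeasurable).aestronglyMeasurable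
        · filter_upwards [ae_restrict_mem measurableSet_Ioc] with u hu
          have he : (∫ s in Ioi (0:ℝ), ‖Real.exp (-(s*u)) * Real.sin u‖)
              = (1/u) * |Real.sin u| := by
            have : ∀ s : ℝ, ‖Real.exp (-(s*u)) * Real.sin u‖
                = Real.exp (-(s*u)) * |Real.sin u| := fun s => by
              rw [Real.norm_eq_abs, abs_mul, abs_of_pos (Real.exp_pos _)]
            simp_rw [this]
            rw [MeasureTheory.integral_mul_const,
              show (fun s => Real.exp (-(s*u))) = (fun s => Real.exp (-(u*s))) from
                funext fun s => by rw [mul_comm], integral_exp_neg_mul hu.1]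
          rw [Real.norm_eq_abs, he, one_div, abs_mul, abs_abs, abs_inv, abs_of_pos hu.1]
          rw [inv_mul_le_iff₀ hu.1, mul_one]
          exact Real.abs_sin_le_abs.trans (le_of_eq (abs_of_pos hu.1))
    have swap := MeasureTheory.integral_integral_swap
      (f := fun u s => Real.exp (-(s*u)) * Real.sin u) hint
    rw [swap]
    apply MeasureTheory.setIntegral_congr_fun measurableSet_Ioi
    intro s _
    simp only
    rw [← intervalIntegral.integral_of_le hR.le, integral_exp_sin]
  have hpi : (∫ s in Ioi (0:ℝ), ((1:ℝ)+s^2)⁻¹) = Real.pi/2 := by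
    rw [integral_Ioi_inv_one_add_sq]; simp
  rw [key, ← hpi, ← MeasureTheory.integral_sub integrable_inv_one_add_sq.integrableOn
    (integrable_remainder hR)]
  apply MeasureTheory.setIntegral_congr_fun measurableSet_Ioi
  intro s _
  simp only
  rw [sub_div, one_div]


lemma remainder_bound {R : ℝ} (hR : 0 < R) :
    |∫ s in Ioi (0:ℝ), Real.exp (-(s*R)) * (Real.cos R + s * Real.sin R) / (1 + s^2)| ≤ 2/R := by
  have h1 : |∫ s in Ioi (0:ℝ), Real.exp (-(s*R)) * (Real.cos R + s * Real.sin R) / (1 + s^2)|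
      ≤ ∫ s in Ioi (0:ℝ), 2 * Real.exp (-(R*s)) := by
    rw [← Real.norm_eq_abs]
    apply MeasureTheory.norm_integral_le_of_norm_le
    · simpa [neg_mul] using (exp_neg_integrableOn_Ioi 0 hR).const_mul 2
    · filter_upwards [ae_restrict_mem measurableSet_Ioi] with s hs
      rw [Real.norm_eq_abs, abs_div, abs_mul, abs_of_pos (Real.exp_pos _),
        abs_of_pos (by positivity : (0:ℝ) < 1 + s^2), mul_div_assoc]
      have h2 := ratio_bound (R := R) s (le_of_lt hs)
      nlinarith [Real.exp_pos (-(s*R)),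
        mul_le_mul_of_nonneg_left h2 (Real.exp_pos (-(s*R))).le,
        (by rw [mul_comm] : Real.exp (-(R*s)) = Real.exp (-(s*R)))]
  calc _ ≤ ∫ s in Ioi (0:ℝ), 2 * Real.exp (-(R*s)) := h1
    _ = 2 * (1/R) := by rw [MeasureTheory.integral_const_mul, integral_exp_neg_mul hR]
    _ = 2/R := by ring

lemma Si_bound (y : ℝ) : |Si y| ≤ Real.pi/2 + 2 := by
  have key : ∀ z : ℝ, 0 ≤ z → |Si z| ≤ Real.pi/2 + 2 := by
    intro z hz
    rcases le_or_gt z 1 with h | h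
    · have : ‖∫ v in (0:ℝ)..z, Real.sin v / v‖ ≤ 1 * |z - 0| :=
        intervalIntegral.norm_integral_le_of_norm_le_const fun v _ => by
          rw [Real.norm_eq_abs]; exact abs_sinc_le_one v
      rw [show Si z = ∫ v in (0:ℝ)..z, Real.sin v / v from rfl, ← Real.norm_eq_abs]
      simp only [sub_zero, abs_of_nonneg hz] at this
      have hpi : (0:ℝ) ≤ Real.pi/2 := by positivity
      linarith
    · have h0 : (0:ℝ) < z := by linarith
      rw [Si_eq h0]
      have h2 := remainder_bound h0
      have h3 : 2/z ≤ 2 := by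
        rw [div_le_iff₀ h0]; nlinarith
      set E := ∫ (s : ℝ) in Ioi (0:ℝ), Real.exp (-(s * z)) * (Real.cos z + s * Real.sin z) / (1 + s ^ 2) with hE
      calc |Real.pi/2 - E| ≤ |Real.pi/2| + |E| := abs_sub _ _
        _ ≤ Real.pi/2 + 2 := by
            rw [abs_of_nonneg (by positivity : (0:ℝ) ≤ Real.pi/2)]
            linarith
  rcases le_or_gt 0 y with h | h
  · exact key y h
  · have := key (-y) (by linarith)
    rwa [Si_neg, abs_neg] at this

lemma Si_tendsto : Tendsto Si atTop (nhds (Real.pi/2)) := by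
  have h : ∀ᶠ R in atTop, |Si R - Real.pi/2| ≤ 2/R := by
    filter_upwards [eventually_gt_atTop (0:ℝ)] with R hR
    rw [Si_eq hR, sub_sub_cancel_left, abs_neg]
    exact remainder_bound hR
  have h2 : Tendsto (fun R : ℝ => 2/R) atTop (nhds 0) :=
    tendsto_const_nhds.div_atTop tendsto_id
  rw [show Real.pi/2 = Real.pi/2 + 0 by ring]
  have : Tendsto (fun R => Si R - Real.pi/2) atTop (nhds 0) := by
    apply squeeze_zero_norm' h h2
  simpa using this.add_const (Real.pi/2)

section D
lemma Si_scale {t : ℝ} (ht : t ≠ 0) (R : ℝ) :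
    ∫ u in (0:ℝ)..R, Real.sin (t*u)/u = Si (t*R) := by
  have h : ∀ u : ℝ, Real.sin (t*u)/u = t * ((fun v => Real.sin v / v) (t*u)) := by
    intro u
    rcases eq_or_ne u 0 with h | h
    · simp [h]
    · field_simp
  rw [intervalIntegral.integral_congr (fun u _ => h u),
    intervalIntegral.integral_const_mul,
    intervalIntegral.integral_comp_mul_left (fun v => Real.sin v / v) ht, mul_zero]
  rw [smul_eq_mul, ← mul_assoc, mul_inv_cancel₀ ht, one_mul]
  rfl

lemma abs_sin_div_le (t u : ℝ) (hu : 0 < u) : |Real.sin (t*u) / u| ≤ |t| := by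
  rw [abs_div, abs_of_pos hu, div_le_iff₀ hu]
  calc |Real.sin (t*u)| ≤ |t*u| := Real.abs_sin_le_abs
    _ = |t| * u := by rw [abs_mul, abs_of_pos hu]

variable {g : ℝ → ℝ} (hgc : Continuous g) (hsupp : HasCompactSupport g)

include hgc hsupp in
lemma stepB {R : ℝ} (hR : 0 < R) :
    ∫ u in Ioc (0:ℝ) R, ∫ t : ℝ, 2 * g t * Real.sin (t*u) / u
      = ∫ t : ℝ, 2 * g t * Si (t*R) := by
  have hmea : Measurable fun p : ℝ × ℝ => 2 * g p.2 * Real.sin (p.2 * p.1) / p.1 :=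
    ((measurable_const.mul (hgc.measurable.comp measurable_snd)).mul
      (measurable_snd.mul measurable_fst).sin).div measurable_fst
  have hbound : Integrable (fun t : ℝ => 2 * |g t| * |t|) := by
    have hc : Continuous fun t : ℝ => 2 * |g t| * |t| := by continuity
    apply hc.integrable_of_hasCompactSupport
    exact (hsupp.abs.mul_left).mul_right
  have hslice : ∀ u : ℝ, 0 < u → Integrable (fun t => 2 * g t * Real.sin (t*u) / u) := by
    intro u hu
    have hc : Continuous fun t : ℝ => 2 * g t * Real.sin (t*u) / u := by
      apply Continuous.div_const
      exact (continuous_const.mul hgc).mul (Real.continuous_sin.comp (continuous_id.mul continuous_const))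
    apply hc.integrable_of_hasCompactSupport
    rw [show (fun t => 2 * g t * Real.sin (t*u) / u)
        = (fun t => (2 * g t) * (Real.sin (t*u) / u)) from funext fun t => by ring]
    exact (hsupp.mul_left).mul_right
  have hslice_bd : ∀ u : ℝ, 0 < u →
      (∫ t : ℝ, ‖2 * g t * Real.sin (t*u) / u‖) ≤ ∫ t : ℝ, 2 * |g t| * |t| := by
    intro u hu
    apply MeasureTheory.integral_mono (hslice u hu).norm hbound
    intro t
    simp only [Real.norm_eq_abs]
    calc |2 * g t * Real.sin (t*u) / u| = 2 * |g t| * |Real.sin (t*u) / u| := by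
          rw [mul_div_assoc, abs_mul, abs_mul, abs_two]
      _ ≤ 2 * |g t| * |t| := by
          have := abs_sin_div_le t u hu
          have h2 : (0:ℝ) ≤ 2 * |g t| := by positivity
          exact mul_le_mul_of_nonneg_left this h2
  have hint : Integrable (fun p : ℝ × ℝ => 2 * g p.2 * Real.sin (p.2 * p.1) / p.1)
      ((volume.restrict (Ioc (0:ℝ) R)).prod volume) := by
    rw [MeasureTheory.integrable_prod_iff hmea.aestronglyMeasurable]
    constructor
    · filter_upwards [ae_restrict_mem measurableSet_Ioc] with u hu
      exact hslice u hu.1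
    · refine Integrable.mono' (integrable_const (∫ t : ℝ, 2 * |g t| * |t|)) ?_ ?_
      · exact (StronglyMeasurable.integral_prod_right'
          (f := fun p : ℝ × ℝ => ‖2 * g p.2 * Real.sin (p.2 * p.1) / p.1‖)
          hmea.norm.stronglyMeasurable).aestronglyMeasurable
      · filter_upwards [ae_restrict_mem measurableSet_Ioc] with u hu
        rw [Real.norm_eq_abs, abs_of_nonneg (by positivity)]
        exact hslice_bd u hu.1
  have swap := MeasureTheory.integral_integral_swap
    (f := fun u t => 2 * g t * Real.sin (t*u) / u) hint
  rw [swap]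
  apply MeasureTheory.integral_congr_ae
  apply Filter.Eventually.of_forall
  intro t
  simp only
  rcases eq_or_ne t 0 with h | h
  · subst h; simp [Si]
  · have : ∀ u : ℝ, 2 * g t * Real.sin (t*u) / u = (2 * g t) * (Real.sin (t*u) / u) :=
      fun u => by ring
    simp_rw [this]
    rw [MeasureTheory.integral_const_mul, ← intervalIntegral.integral_of_le hR.le,
      Si_scale h R]
end D

section E
variable {g : ℝ → ℝ} (hgc : Continuous g) (hsupp : HasCompactSupport g)

include hgc hsupp in
lemma stepC :
    Tendsto (fun R : ℝ => ∫ t : ℝ, 2 * g t * Si (t*R)) atTop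
      (nhds (Real.pi * ∫ t : ℝ, Real.sign t * g t)) := by
  have habs : Integrable (fun t : ℝ => 2 * |g t| * (Real.pi/2 + 2)) := by
    have hc : Continuous fun t : ℝ => 2 * |g t| * (Real.pi/2 + 2) := by continuity
    exact hc.integrable_of_hasCompactSupport ((hsupp.abs.mul_left).mul_right)
  have key : Tendsto (fun R : ℝ => ∫ t : ℝ, 2 * g t * Si (t*R)) atTop
      (nhds (∫ t : ℝ, 2 * g t * (Real.pi/2 * Real.sign t))) := by
    apply MeasureTheory.tendsto_integral_filter_of_dominated_convergence
      (fun t => 2 * |g t| * (Real.pi/2 + 2))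
    · apply Filter.Eventually.of_forall
      intro R
      exact ((continuous_const.mul hgc).mul
        (continuous_Si.comp (continuous_id.mul continuous_const))).aestronglyMeasurable
    · apply Filter.Eventually.of_forall
      intro R
      apply Filter.Eventually.of_forall
      intro t
      rw [Real.norm_eq_abs, abs_mul, abs_mul, abs_two]
      exact mul_le_mul_of_nonneg_left (Si_bound _) (by positivity)
    · exact habs
    · apply Filter.Eventually.of_forall
      intro t
      rcases lt_trichotomy t 0 with h | h | h
      · have h1 : Tendsto (fun R : ℝ => t * R) atTop atBot :=
          tendsto_id.const_mul_atTop_of_neg h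
        have h2 : Tendsto Si atBot (nhds (-(Real.pi/2))) := by
          have : Tendsto (fun y : ℝ => - Si (-y)) atBot (nhds (-(Real.pi/2))) := by
            apply Tendsto.neg
            exact Si_tendsto.comp tendsto_neg_atBot_atTop
          apply this.congr
          intro y
          rw [Si_neg, neg_neg]
        have := (h2.comp h1).const_mul (2 * g t)
        rw [Real.sign_of_neg h]
        convert ((h2.comp h1).const_mul (2 * g t)) using 2 <;> ring_nf <;> rfl
      · subst h
        simp only [zero_mul, Real.sign_zero]
        rw [show Si 0 = 0 from intervalIntegral.integral_same]
        simpa using tendsto_const_nhds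
      · have h1 : Tendsto (fun R : ℝ => t * R) atTop atTop :=
          tendsto_id.const_mul_atTop h
        rw [Real.sign_of_pos h]
        convert ((Si_tendsto.comp h1).const_mul (2 * g t)) using 2 <;> ring_nf <;> rfl
  have : (∫ t : ℝ, 2 * g t * (Real.pi/2 * Real.sign t))
      = Real.pi * ∫ t : ℝ, Real.sign t * g t := by
    rw [← MeasureTheory.integral_const_mul]
    congr 1
    ext t
    ring
  rwa [this] at key
end E

section F
variable {g : ℝ → ℝ} (hg : ContDiff ℝ (⊤ : ℕ∞) g) (hsupp : HasCompactSupport g)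

include hg hsupp in
lemma F_decay : ∃ C : ℝ, ∀ c : ℝ, 1 ≤ c →
    |∫ t : ℝ, g t * Real.sin (t*c)| ≤ C / c^2 := by
  -- the support radius
  obtain ⟨r, hr⟩ := hsupp.isBounded.subset_closedBall 0
  set M : ℝ := |r| + 1 with hM
  have hM0 : 0 < M := by positivity
  have hsub : tsupport g ⊆ Ioo (-M) M := by
    intro x hx
    have := hr hx
    rw [Real.closedBall_eq_Icc] at this
    have h1 := this.1
    have h2 := this.2
    have : |r| ≥ r := le_abs_self r
    constructor <;> simp only [zero_sub, zero_add] at h1 h2 <;> [nlinarith; nlinarith]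
  have hgM : g M = 0 := image_eq_zero_of_notMem_tsupport fun h => by
    have := (hsub h).2; linarith
  have hgmM : g (-M) = 0 := image_eq_zero_of_notMem_tsupport fun h => by
    have := (hsub h).1; linarith
  -- derivatives
  have hgd : Differentiable ℝ g := hg.differentiable (by simp)
  set g1 : ℝ → ℝ := deriv g with hg1def
  have hg1 : ContDiff ℝ (⊤ : ℕ∞) g1 := (contDiff_infty_iff_deriv.mp hg).2
  have hg1d : Differentiable ℝ g1 := hg1.differentiable (by simp)
  set g2 : ℝ → ℝ := deriv g1 with hg2def
  have hg2c : Continuous g2 := (contDiff_infty_iff_deriv.mp hg1).2.continuous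
  have hsupp1 : HasCompactSupport g1 := hsupp.deriv
  have hsupp2 : HasCompactSupport g2 := hsupp1.deriv
  have hg1M : g1 M = 0 := image_eq_zero_of_notMem_tsupport fun h => by
    have := hsub (closure_minimal support_deriv_subset (isClosed_tsupport g) h); exact absurd this.2 (by linarith)
  have hg1mM : g1 (-M) = 0 := image_eq_zero_of_notMem_tsupport fun h => by
    have := hsub (closure_minimal support_deriv_subset (isClosed_tsupport g) h); exact absurd this.1 (by linarith)
  -- sup bound for g2
  obtain ⟨x0, hx0⟩ := (hg2c.abs).exists_forall_ge_of_hasCompactSupport hsupp2.abs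
  set C2 : ℝ := |g2 x0| with hC2
  have hC2nn : 0 ≤ C2 := abs_nonneg _
  refine ⟨C2 * (2*M), ?_⟩
  intro c hc
  have hc0 : c ≠ 0 := by positivity
  have hc2 : (0:ℝ) < c^2 := by positivity
  -- restrict to [-M, M]
  have hres : (∫ t : ℝ, g t * Real.sin (t*c)) = ∫ t in (-M)..M, g t * Real.sin (t*c) := by
    rw [intervalIntegral.integral_of_le (by linarith), ← MeasureTheory.setIntegral_eq_integral_of_forall_compl_eq_zero
      (s := Ioc (-M) M) ]
    intro x hx
    have : g x = 0 := image_eq_zero_of_notMem_tsupport fun h => hx (Ioo_subset_Ioc_self (hsub h))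
    rw [this, zero_mul]
  -- derivative facts
  have hcos : ∀ t : ℝ, HasDerivAt (fun t => -(Real.cos (t*c))/c) (Real.sin (t*c)) t := by
    intro t
    have h1 : HasDerivAt (fun t : ℝ => t*c) c t := hasDerivAt_mul_const c
    have h2 := (Real.hasDerivAt_cos (t*c)).comp t h1
    have := (h2.neg.div_const c)
    refine this.congr_deriv ?_
    rw [div_eq_iff hc0]
    ring
  have hsin : ∀ t : ℝ, HasDerivAt (fun t => Real.sin (t*c)/c) (Real.cos (t*c)) t := by
    intro t
    have h1 : HasDerivAt (fun t : ℝ => t*c) c t := hasDerivAt_mul_const c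
    have h2 := (Real.hasDerivAt_sin (t*c)).comp t h1
    have := h2.div_const c
    refine this.congr_deriv ?_
    rw [div_eq_iff hc0]
  -- first integration by parts
  have ibp1 := intervalIntegral.integral_mul_deriv_eq_deriv_mul
    (u := g) (u' := g1) (v := fun t => -(Real.cos (t*c))/c) (v' := fun t => Real.sin (t*c))
    (a := -M) (b := M)
    (fun x _ => (hgd x).hasDerivAt) (fun x _ => hcos x)
    (hg1.continuous.intervalIntegrable _ _)
    ((Real.continuous_sin.comp (continuous_id.mul continuous_const)).intervalIntegrable _ _)
  rw [hgM, hgmM, zero_mul, zero_mul, sub_zero, zero_sub] at ibp1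
  -- second integration by parts
  have ibp2 := intervalIntegral.integral_mul_deriv_eq_deriv_mul
    (u := g1) (u' := g2) (v := fun t => Real.sin (t*c)/c) (v' := fun t => Real.cos (t*c))
    (a := -M) (b := M)
    (fun x _ => (hg1d x).hasDerivAt) (fun x _ => hsin x)
    (hg2c.intervalIntegrable _ _)
    ((Real.continuous_cos.comp (continuous_id.mul continuous_const)).intervalIntegrable _ _)
  rw [hg1M, hg1mM, zero_mul, zero_mul, sub_zero, zero_sub] at ibp2
  -- combine
  have key : (∫ t in (-M)..M, g t * Real.sin (t*c))
      = -(∫ t in (-M)..M, g2 t * Real.sin (t*c)) / c^2 := by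
    rw [ibp1]
    have e1 : (∫ t in (-M)..M, g1 t * (-(Real.cos (t*c))/c))
        = -(∫ t in (-M)..M, g1 t * Real.cos (t*c))/c := by
      rw [← intervalIntegral.integral_neg, ← intervalIntegral.integral_div]
      apply intervalIntegral.integral_congr
      intro x _
      field_simp
    rw [e1, ibp2]
    have e2 : (∫ t in (-M)..M, g2 t * (Real.sin (t*c)/c))
        = (∫ t in (-M)..M, g2 t * Real.sin (t*c))/c := by
      rw [← intervalIntegral.integral_div]
      apply intervalIntegral.integral_congr
      intro x _
      field_simp
    rw [e2]
    field_simp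
    congr 1; congr 1; ext t; ring
  rw [hres, key]
  have hbd : |∫ t in (-M)..M, g2 t * Real.sin (t*c)| ≤ C2 * |M - (-M)| := by
    rw [← Real.norm_eq_abs (∫ t in (-M)..M, g2 t * Real.sin (t*c))]
    apply intervalIntegral.norm_integral_le_of_norm_le_const
    intro x _
    rw [Real.norm_eq_abs, abs_mul]
    calc |g2 x| * |Real.sin (x*c)| ≤ |g2 x| * 1 := by
          exact mul_le_mul_of_nonneg_left (Real.abs_sin_le_one _) (abs_nonneg _)
      _ = |g2 x| := mul_one _
      _ ≤ C2 := hx0 x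
  have : |M - (-M)| = 2*M := by rw [abs_of_pos (by linarith)]; ring
  rw [this] at hbd
  rw [abs_div, abs_neg, abs_of_pos hc2]
  gcongr
end F

section G
variable {g : ℝ → ℝ} (hgc : Continuous g) (hsupp : HasCompactSupport g)

include hgc hsupp in
lemma F_cont : Continuous fun u : ℝ => ∫ t : ℝ, g t * Real.sin (t*u) := by
  apply MeasureTheory.continuous_of_dominated (bound := fun t => |g t|)
  · intro u
    exact (hgc.mul (Real.continuous_sin.comp (continuous_id.mul continuous_const))).aestronglyMeasurable
  · intro u
    apply Filter.Eventually.of_forall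
    intro t
    rw [Real.norm_eq_abs, abs_mul]
    nlinarith [Real.abs_sin_le_one (t*u), abs_nonneg (g t), abs_nonneg (Real.sin (t*u))]
  · exact hgc.abs.integrable_of_hasCompactSupport hsupp.abs
  · apply Filter.Eventually.of_forall
    intro t
    exact continuous_const.mul (Real.continuous_sin.comp (continuous_const.mul continuous_id))

include hgc hsupp in
lemma F_slice_int (u : ℝ) : Integrable fun t : ℝ => g t * Real.sin (t*u) :=
  ((hgc.mul (Real.continuous_sin.comp (continuous_id.mul continuous_const)))).integrable_of_hasCompactSupport
    hsupp.mul_right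

include hgc hsupp in
lemma F_small {u : ℝ} (hu : 0 < u) :
    |∫ t : ℝ, g t * Real.sin (t*u)| ≤ u * ∫ t : ℝ, |g t| * |t| := by
  have hb : Integrable (fun t : ℝ => |g t| * |t| * u) := by
    apply Integrable.mul_const
    exact ((hgc.abs.mul continuous_abs)).integrable_of_hasCompactSupport
      (hsupp.abs.mul_right)
  calc |∫ t : ℝ, g t * Real.sin (t*u)| ≤ ∫ t : ℝ, ‖g t * Real.sin (t*u)‖ := by
        rw [← Real.norm_eq_abs]
        exact MeasureTheory.norm_integral_le_integral_norm _
    _ ≤ ∫ t : ℝ, |g t| * |t| * u := by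
        apply MeasureTheory.integral_mono (F_slice_int hgc hsupp u).norm hb
        intro t
        dsimp only
        rw [Real.norm_eq_abs, abs_mul]
        have h1 : |Real.sin (t*u)| ≤ |t| * u := by
          calc |Real.sin (t*u)| ≤ |t*u| := Real.abs_sin_le_abs
            _ = |t| * u := by rw [abs_mul, abs_of_pos hu]
        nlinarith [abs_nonneg (g t), abs_nonneg (Real.sin (t*u)), abs_nonneg t]
    _ = u * ∫ t : ℝ, |g t| * |t| := by
        rw [MeasureTheory.integral_mul_const]; ring

include hgc hsupp in
lemma h_meas : AEStronglyMeasurable (fun u : ℝ => 2 * (∫ t : ℝ, g t * Real.sin (t*u)) / u)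
    (volume.restrict (Ioi (0:ℝ))) :=
  (((measurable_const.mul (F_cont hgc hsupp).measurable).div measurable_id)).aestronglyMeasurable

variable (hg : ContDiff ℝ (⊤ : ℕ∞) g)

include hg hsupp in
lemma h_int : IntegrableOn (fun u : ℝ => 2 * (∫ t : ℝ, g t * Real.sin (t*u)) / u)
    (Ioi (0:ℝ)) := by
  have hgc : Continuous g := hg.continuous
  obtain ⟨C, hC⟩ := F_decay hg hsupp
  have hC0 : 0 ≤ C := by
    have := hC 1 le_rfl
    simp at this
    linarith [abs_nonneg (∫ t : ℝ, g t * Real.sin t)]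
  rw [show Ioi (0:ℝ) = Ioc (0:ℝ) 1 ∪ Ioi 1 from (Ioc_union_Ioi_eq_Ioi zero_le_one).symm]
  apply MeasureTheory.IntegrableOn.union
  · refine Integrable.mono' (integrable_const (2 * ∫ t : ℝ, |g t| * |t|))
      ((h_meas hgc hsupp).mono_measure (Measure.restrict_mono Ioc_subset_Ioi_self le_rfl)) ?_
    filter_upwards [ae_restrict_mem measurableSet_Ioc] with u hu
    rw [Real.norm_eq_abs, abs_div, abs_mul, abs_two, abs_of_pos hu.1]
    rw [div_le_iff₀ hu.1]
    have := F_small hgc hsupp hu.1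
    calc 2 * |∫ t : ℝ, g t * Real.sin (t*u)| ≤ 2 * (u * ∫ t : ℝ, |g t| * |t|) := by linarith
      _ = 2 * (∫ t : ℝ, |g t| * |t|) * u := by ring
  · have hbint : IntegrableOn (fun u : ℝ => 2*C * (u^2)⁻¹) (Ioi 1) := by
      have h2 := (integrableOn_Ioi_rpow_of_lt (by norm_num : (-2:ℝ) < -1) one_pos).const_mul (2*C)
      refine MeasureTheory.IntegrableOn.congr_fun h2 ?_ measurableSet_Ioi
      intro x hx
      have hx0 : (0:ℝ) ≤ x := by linarith [mem_Ioi.mp hx]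
      have he : ((-2:ℝ)) = -((2:ℕ):ℝ) := by norm_num
      simp only [he]
      rw [Real.rpow_neg hx0, Real.rpow_natCast]
    refine Integrable.mono' hbint
      ((h_meas hgc hsupp).mono_measure (Measure.restrict_mono (Ioi_subset_Ioi zero_le_one) le_rfl)) ?_
    filter_upwards [ae_restrict_mem measurableSet_Ioi] with u hu
    have hu1 : (1:ℝ) ≤ u := le_of_lt hu
    have hu0 : (0:ℝ) < u := by linarith
    rw [Real.norm_eq_abs, abs_div, abs_mul, abs_two, abs_of_pos hu0, div_le_iff₀ hu0]
    have hd := hC u hu1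
    have hu2 : (0:ℝ) < u^2 := by positivity
    calc 2 * |∫ t : ℝ, g t * Real.sin (t*u)| ≤ 2 * (C / u^2) := by linarith
      _ ≤ 2*C * (u^2)⁻¹ * u := by
          rw [div_eq_mul_inv]
          nlinarith [mul_nonneg (mul_nonneg hC0 (inv_pos.mpr hu2).le) (sub_nonneg.mpr hu1)]
end G

end St17

open St17

/-- The distributional computation at the end of the proof of Theorem 4.1: for every smooth,
compactly supported `g : ℝ → ℝ`, the integral
`∫_0^∞ x^{-1/2} (∫ g(t) sin(t√x)/√x dt) dx` converges absolutely and equals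
`π ∫ sgn(t) g(t) dt`. -/
theorem statement17 (g : ℝ → ℝ) (hg : ContDiff ℝ (⊤ : ℕ∞) g)
    (hsupp : HasCompactSupport g) :
    IntegrableOn (fun x : ℝ =>
      (Real.sqrt x)⁻¹ * ∫ t : ℝ, g t * (Real.sin (t * Real.sqrt x) / Real.sqrt x))
      (Set.Ioi 0) ∧
    (∫ x in Set.Ioi (0:ℝ),
        (Real.sqrt x)⁻¹ * ∫ t : ℝ, g t * (Real.sin (t * Real.sqrt x) / Real.sqrt x))
      = Real.pi * ∫ t : ℝ, Real.sign t * g t := by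
  have hgc : Continuous g := hg.continuous
  set φ : ℝ → ℝ := fun x =>
    (Real.sqrt x)⁻¹ * ∫ t : ℝ, g t * (Real.sin (t * Real.sqrt x) / Real.sqrt x) with hφ
  set h : ℝ → ℝ := fun u => 2 * (∫ t : ℝ, g t * Real.sin (t*u)) / u with hh
  -- change of variables x = u^2
  have hd : ∀ u ∈ Ioi (0:ℝ), HasDerivWithinAt (fun y : ℝ => y^2) (2*u) (Ioi 0) u := by
    intro u _
    simpa using (hasDerivAt_pow 2 u).hasDerivWithinAt
  have hinj : InjOn (fun y : ℝ => y^2) (Ioi 0) := by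
    intro a ha b hb hab
    simp only at hab
    rw [← Real.sqrt_sq (le_of_lt ha), hab, Real.sqrt_sq (le_of_lt hb)]
  have himg : (fun y : ℝ => y^2) '' Ioi 0 = Ioi 0 := by
    ext x
    constructor
    · rintro ⟨u, hu, rfl⟩
      have : (0:ℝ) < u := hu
      exact mem_Ioi.mpr (by positivity)
    · intro hx
      exact ⟨Real.sqrt x, mem_Ioi.mpr (Real.sqrt_pos.mpr hx), Real.sq_sqrt (le_of_lt hx)⟩
  have heq : EqOn (fun u : ℝ => |2*u| • φ (u^2)) h (Ioi 0) := by
    intro u hu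
    have hu0 : (0:ℝ) < u := hu
    simp only [smul_eq_mul]
    have hs : Real.sqrt (u^2) = u := Real.sqrt_sq hu0.le
    have hinner : (∫ t : ℝ, g t * (Real.sin (t * u) / u))
        = (∫ t : ℝ, g t * Real.sin (t*u)) / u := by
      rw [← MeasureTheory.integral_div]
      congr 1
      ext t
      ring
    rw [hφ, hh]
    simp only [hs]
    rw [hinner, abs_of_pos (by linarith : (0:ℝ) < 2*u)]
    field_simp
  have hIh := h_int hsupp hg
  have hiff := integrableOn_image_iff_integrableOn_abs_deriv_smul
    measurableSet_Ioi hd hinj φ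
  rw [himg] at hiff
  have hIφ : IntegrableOn φ (Ioi 0) := by
    rw [hiff]
    exact (hIh.congr_fun heq.symm measurableSet_Ioi : _)
  constructor
  · exact hIφ
  · have hval := integral_image_eq_integral_abs_deriv_smul measurableSet_Ioi hd hinj φ
    rw [himg] at hval
    have hval2 : (∫ x in Ioi (0:ℝ), φ x) = ∫ u in Ioi (0:ℝ), h u := by
      rw [hval]
      exact MeasureTheory.setIntegral_congr_fun measurableSet_Ioi heq
    -- limit of interval integrals
    have T1 : Tendsto (fun R : ℝ => ∫ u in (0:ℝ)..R, h u) atTop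
        (nhds (∫ u in Ioi (0:ℝ), h u)) :=
      MeasureTheory.intervalIntegral_tendsto_integral_Ioi 0 hIh tendsto_id
    have T2 : (fun R : ℝ => ∫ u in (0:ℝ)..R, h u) =ᶠ[atTop]
        (fun R : ℝ => ∫ t : ℝ, 2 * g t * Si (t*R)) := by
      filter_upwards [eventually_gt_atTop (0:ℝ)] with R hR
      rw [intervalIntegral.integral_of_le hR.le, ← stepB hgc hsupp hR]
      apply MeasureTheory.setIntegral_congr_fun measurableSet_Ioc
      intro u hu
      rw [hh]
      simp only
      have : ∀ t : ℝ, 2 * g t * Real.sin (t*u) / u = 2 * ((g t * Real.sin (t*u)) / u) :=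
        fun t => by ring
      simp_rw [this]
      rw [MeasureTheory.integral_const_mul, MeasureTheory.integral_div]
      ring
    have T3 := T1.congr' T2
    have := tendsto_nhds_unique T3 (stepC hgc hsupp)
    rw [hval2, this]
end
end

section
/- Let g : ℝ → ℝ be continuous, nonnegative, not identically zero, with compact support contained in (1,∞). Then ∫_1^∞ e^{−√u} · |∫_ℝ g(t) sinh(t√u) dt| · u^{−1/2} du = +∞. (Equivalently, with dν(x) = χ_{(−∞,−1)}(x) e^{−|x|^{1/2}} dx, the integral ∫ |∫ g(t) sin(t√x)/√x dt| d|ν|(x) diverges, since sin(t√x)/√x = sinh(t√|x|)/√|x| for x < 0.) -/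
open MeasureTheory Filter Set

noncomputable section

private lemma aux_step5 (ε s I : ℝ) (h1 : 4 ≤ ε ^ 2 * s) (hs : 0 < s) (hI : 0 < I) :
    I / 4 * s ≤ (ε * s / 2) ^ 2 * I / 4 := by
  have h2 : 4 * (s * I) ≤ ε ^ 2 * s * (s * I) :=
    mul_le_mul_of_nonneg_right h1 (mul_nonneg hs.le hI.le)
  linarith

/-- The divergence at the end of Section 6: if `g : ℝ → ℝ` is continuous, nonnegative, not
identically zero, with compact support contained in `(1,∞)`, then
`∫_1^∞ e^{-√u} |∫ g(t) sinh(t√u) dt| u^{-1/2} du = +∞`. -/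
theorem statement18 (g : ℝ → ℝ) (hc : Continuous g) (hnn : ∀ t : ℝ, 0 ≤ g t)
    (hne : g ≠ 0) (hcs : HasCompactSupport g) (hsub : tsupport g ⊆ Set.Ioi 1) :
    ∫⁻ u in Set.Ioi (1:ℝ), ENNReal.ofReal
        (Real.exp (-Real.sqrt u) * |∫ t : ℝ, g t * Real.sinh (t * Real.sqrt u)| *
          (Real.sqrt u)⁻¹)
      = ⊤ := by
  -- setup
  have hsupp_ne : (Function.support g).Nonempty := Function.support_nonempty_iff.mpr hne
  have hts_ne : (tsupport g).Nonempty := hsupp_ne.mono (subset_tsupport g)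
  set a : ℝ := sInf (tsupport g) with ha_def
  have ha_mem : a ∈ tsupport g := hcs.sInf_mem hts_ne
  have ha1 : 1 < a := hsub ha_mem
  have h_le : ∀ t ∈ Function.support g, a ≤ t := fun t ht =>
    csInf_le hcs.bddBelow (subset_tsupport g ht)
  -- positive total mass
  have hint : Integrable g := hc.integrable_of_hasCompactSupport hcs
  set I : ℝ := ∫ t : ℝ, g t with hI_def
  have hI : 0 < I := by
    rw [hI_def, integral_pos_iff_support_of_nonneg (fun t => hnn t) hint]
    exact hc.isOpen_support.measure_pos volume hsupp_ne
  set ε : ℝ := a - 1 with hε_def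
  have hε : 0 < ε := by simp [hε_def]; linarith
  set M : ℝ := max 1 ((4 / ε ^ 2) ^ 2) with hM_def
  have hM1 : (1 : ℝ) ≤ M := le_max_left _ _
  -- key pointwise bound on Ioi M
  have key : ∀ u ∈ Set.Ioi M,
      ENNReal.ofReal (I / 4) ≤ ENNReal.ofReal
        (Real.exp (-Real.sqrt u) * |∫ t : ℝ, g t * Real.sinh (t * Real.sqrt u)| *
          (Real.sqrt u)⁻¹) := by
    intro u hu
    have hu1 : 1 ≤ u := le_trans hM1 (le_of_lt hu)
    set s : ℝ := Real.sqrt u with hs_def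
    have hs1 : 1 ≤ s := Real.one_le_sqrt.mpr hu1
    have hs0 : 0 < s := lt_of_lt_of_le one_pos hs1
    have hs2 : 4 / ε ^ 2 ≤ s := by
      have h1 : (0:ℝ) ≤ 4 / ε ^ 2 := by positivity
      have h2 : (4 / ε ^ 2) = Real.sqrt ((4 / ε ^ 2) ^ 2) := (Real.sqrt_sq h1).symm
      rw [h2, hs_def]
      exact Real.sqrt_le_sqrt (le_trans (le_max_right _ _) (le_of_lt hu))
    -- inner integral lower bound
    set J : ℝ := ∫ t : ℝ, g t * Real.sinh (t * s) with hJ_def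
    have hint2 : Integrable (fun t : ℝ => g t * Real.sinh (t * s)) := by
      apply Continuous.integrable_of_hasCompactSupport
      · exact hc.mul (Real.continuous_sinh.comp (continuous_id.mul continuous_const))
      · exact hcs.mul_right
    have hJ_ge : Real.sinh (a * s) * I ≤ J := by
      have : (∫ t : ℝ, g t * Real.sinh (a * s)) ≤ J := by
        apply integral_mono (hint.mul_const _) hint2
        intro t
        by_cases ht : g t = 0
        · simp [ht]
        · have hat : a ≤ t := h_le t ht
          have : Real.sinh (a * s) ≤ Real.sinh (t * s) :=
            Real.sinh_le_sinh.mpr (mul_le_mul_of_nonneg_right hat hs0.le)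
          exact mul_le_mul_of_nonneg_left this (hnn t)
      rwa [integral_mul_const, mul_comm] at this
    have has1 : 1 ≤ a * s := by nlinarith
    have hsinh : Real.exp (a * s) / 4 ≤ Real.sinh (a * s) := by
      have h1 : Real.exp (-(a * s)) ≤ 1 := Real.exp_le_one_iff.mpr (by linarith)
      have h2 : (2:ℝ) ≤ Real.exp (a * s) := le_trans (by linarith) (Real.add_one_le_exp _)
      rw [Real.sinh_eq]
      linarith
    have hJpos : 0 < J := by
      have : 0 < Real.sinh (a * s) := Real.sinh_pos_iff.mpr (by linarith)
      nlinarith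
    have habs : |J| = J := abs_of_pos hJpos
    -- exponential lower bound
    have hE : Real.exp (-s) * Real.exp (a * s) = Real.exp (ε * s) := by
      rw [← Real.exp_add, hε_def]; ring_nf
    have hE2 : (ε * s / 2) ^ 2 ≤ Real.exp (ε * s) := by
      have h1 : Real.exp (ε * s) = (Real.exp (ε * s / 2)) ^ 2 := by
        rw [sq, ← Real.exp_add]; ring_nf
      have h2 : ε * s / 2 ≤ Real.exp (ε * s / 2) :=
        le_trans (by linarith [Real.add_one_le_exp (ε * s / 2)]) le_rfl
      have h2' : ε * s / 2 ≤ Real.exp (ε * s / 2) := by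
        have := Real.add_one_le_exp (ε * s / 2); linarith
      have h3 : (0:ℝ) ≤ ε * s / 2 := by positivity
      rw [h1]
      exact pow_le_pow_left₀ h3 h2' 2
    -- final real inequality
    apply ENNReal.ofReal_le_ofReal
    rw [habs, mul_assoc, mul_comm J s⁻¹, ← mul_assoc, ← div_eq_mul_inv _ s,
      div_mul_eq_mul_div, le_div_iff₀ hs0]
    -- goal : I / 4 * s ≤ exp (-s) * J
    have hexp_pos : 0 < Real.exp (-s) := Real.exp_pos _
    have step1 : Real.exp (-s) * (Real.sinh (a * s) * I) ≤ Real.exp (-s) * J :=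
      mul_le_mul_of_nonneg_left hJ_ge hexp_pos.le
    have step2 : Real.exp (-s) * (Real.exp (a * s) / 4 * I) ≤
        Real.exp (-s) * (Real.sinh (a * s) * I) := by
      apply mul_le_mul_of_nonneg_left _ hexp_pos.le
      exact mul_le_mul_of_nonneg_right hsinh hI.le
    have step3 : Real.exp (-s) * (Real.exp (a * s) / 4 * I) = Real.exp (ε * s) * I / 4 := by
      rw [← hE]; ring
    have step4 : (ε * s / 2) ^ 2 * I / 4 ≤ Real.exp (ε * s) * I / 4 := by
      have := mul_le_mul_of_nonneg_right hE2 hI.le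
      linarith
    have step5 : I / 4 * s ≤ (ε * s / 2) ^ 2 * I / 4 := by
      have h1 : 4 ≤ ε ^ 2 * s := by
        rw [div_le_iff₀ (by positivity : (0:ℝ) < ε ^ 2)] at hs2
        linarith
      exact aux_step5 ε s I h1 hs0 hI
    linarith
  -- conclude divergence
  have h1 : (⊤ : ENNReal) = ∫⁻ _ in Set.Ioi M, ENNReal.ofReal (I / 4) := by
    rw [setLIntegral_const, Real.volume_Ioi, ENNReal.mul_top]
    exact (ENNReal.ofReal_pos.mpr (by positivity)).ne'
  have h2 : (∫⁻ (u : ℝ) in Set.Ioi M, ENNReal.ofReal (I / 4)) ≤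
      ∫⁻ u in Set.Ioi M, ENNReal.ofReal
        (Real.exp (-Real.sqrt u) * |∫ t : ℝ, g t * Real.sinh (t * Real.sqrt u)| *
          (Real.sqrt u)⁻¹) :=
    setLIntegral_mono' measurableSet_Ioi key
  have h3 : (∫⁻ u in Set.Ioi M, ENNReal.ofReal
        (Real.exp (-Real.sqrt u) * |∫ t : ℝ, g t * Real.sinh (t * Real.sqrt u)| *
          (Real.sqrt u)⁻¹)) ≤
      ∫⁻ u in Set.Ioi (1:ℝ), ENNReal.ofReal
        (Real.exp (-Real.sqrt u) * |∫ t : ℝ, g t * Real.sinh (t * Real.sqrt u)| *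
          (Real.sqrt u)⁻¹) :=
    lintegral_mono_set (fun x hx => lt_of_lt_of_le (lt_of_le_of_lt hM1 hx) le_rfl)
  exact top_le_iff.mp (h1 ▸ le_trans h2 h3)
end
end
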